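/- Let N ≥ 2 and r ≥ 2 be integers, let n = N^(2r) and s = N^(2r−1), and let A be a fixed s-element subset of Fin n. If B is drawn uniformly at random from all s-element subsets of Fin n, then the probability that |A ∩ B| ≥ 2·N^(2r−2) is at most exp(−N^(2r−2)/3). -/

import Mathlib

open Finset
open scoped ENNReal


lemma exp_mul_log_two_le (x : ℝ) (h0 : 0 ≤ x) (h1 : x ≤ 1) :
    Real.exp (x * Real.log 2) ≤ 1 + x := by
  have h := convexOn_exp.2 (Set.mem_univ (0:ℝ)) (Set.mem_univ (Real.log 2))
    (by linarith : (0:ℝ) ≤ 1 - x) h0 (by ring)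
  simp only [smul_eq_mul, mul_zero, zero_add, Real.exp_zero] at h
  rw [Real.exp_log (by norm_num : (0:ℝ) < 2)] at h
  linarith

lemma pow_mul_exp_le_descFactorial (μ : ℕ) (hμ : 1 ≤ μ) :
    (μ : ℝ) ^ μ * Real.exp (μ / 3) ≤ ((2 * μ).descFactorial μ : ℝ) := by
  have hμR : (0:ℝ) < μ := by exact_mod_cast hμ
  have hcast : ((2 * μ).descFactorial μ : ℝ) = ∏ i ∈ range μ, ((2 * μ : ℝ) - i) := by
    rw [Nat.descFactorial_eq_prod_range, Nat.cast_prod]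
    refine prod_congr rfl fun i hi => ?_
    have : i ≤ 2 * μ := by have := mem_range.1 hi; omega
    push_cast [Nat.cast_sub this]; ring
  rw [hcast]
  have key : ∀ i ∈ range μ, (μ:ℝ) * Real.exp (((μ:ℝ) - i) / μ * Real.log 2)
      ≤ (2 * μ : ℝ) - i := by
    intro i hi
    have hi' : (i:ℝ) < μ := by exact_mod_cast mem_range.1 hi
    have h0 : 0 ≤ ((μ:ℝ) - i) / μ := by
      apply div_nonneg (by linarith) hμR.le
    have h1 : ((μ:ℝ) - i) / μ ≤ 1 := by
      rw [div_le_one hμR]; have : (0:ℝ) ≤ i := by positivity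
      linarith
    have := exp_mul_log_two_le _ h0 h1
    have h2 : (μ:ℝ) * (1 + ((μ:ℝ) - i) / μ) = (2*μ:ℝ) - i := by
      field_simp; ring
    nlinarith [Real.exp_pos (((μ:ℝ) - i) / μ * Real.log 2)]
  calc (μ : ℝ) ^ μ * Real.exp (μ / 3)
      ≤ ∏ i ∈ range μ, ((μ:ℝ) * Real.exp (((μ:ℝ) - i) / μ * Real.log 2)) := by
        rw [prod_mul_distrib, prod_const, card_range, ← Real.exp_sum]
        apply mul_le_mul_of_nonneg_left _ (by positivity)
        apply Real.exp_le_exp.2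
        have hsumi : (∑ i ∈ range μ, (i:ℝ)) * 2 = (μ:ℝ) * (μ - 1) := by
          have := Finset.sum_range_id_mul_two μ
          have h2 : ((∑ i ∈ range μ, i) * 2 : ℕ) = ((μ * (μ - 1) : ℕ)) := this
          have := congrArg (Nat.cast (R := ℝ)) h2
          push_cast [Nat.cast_sub hμ] at this
          linarith [this]
        have hsum : ∑ i ∈ range μ, (((μ:ℝ) - i) / μ * Real.log 2)
            = Real.log 2 * ((∑ i ∈ range μ, ((μ:ℝ) - i)) / μ) := by
          rw [Finset.sum_div, Finset.mul_sum]
          exact Finset.sum_congr rfl fun i _ => by ring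
        rw [hsum]
        have hs2 : ∑ i ∈ range μ, ((μ:ℝ) - i) = (μ:ℝ) * (μ + 1) / 2 := by
          rw [Finset.sum_sub_distrib, Finset.sum_const, card_range, nsmul_eq_mul]
          linarith
        rw [hs2]
        have hlog : (2:ℝ)/3 ≤ Real.log 2 := by
          have := Real.log_two_gt_d9; linarith
        have : (μ:ℝ) * (μ + 1) / 2 / μ = (μ + 1) / 2 := by field_simp
        rw [this]
        nlinarith
      _ ≤ ∏ i ∈ range μ, ((2 * μ : ℝ) - i) := by
        apply Finset.prod_le_prod (fun i _ => by positivity) key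


lemma superset_count {n s μ : ℕ} (hμs : μ ≤ s) (T : Finset (Fin n)) (hT : T.card = μ) :
    ((Finset.powersetCard s (Finset.univ : Finset (Fin n))).filter (fun B => T ⊆ B)).card
      = (n - μ).choose (s - μ) := by
  classical
  have : ((Finset.powersetCard s (Finset.univ : Finset (Fin n))).filter (fun B => T ⊆ B)).card
      = (Finset.powersetCard (s - μ) Tᶜ).card := by
    apply Finset.card_bij' (fun B _ => B \ T) (fun C _ => C ∪ T)
    · intro B hB
      simp only [mem_filter, Finset.mem_powersetCard] at hB
      obtain ⟨⟨_, hBs⟩, hTB⟩ := hB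
      simp only [Finset.mem_powersetCard]
      constructor
      · intro x hx
        simp only [Finset.mem_sdiff] at hx
        simp [Finset.mem_compl, hx.2]
      · rw [Finset.card_sdiff_of_subset hTB, hBs, hT]
    · intro C hC
      simp only [Finset.mem_powersetCard] at hC
      obtain ⟨hCsub, hCcard⟩ := hC
      have hdisj : Disjoint C T := by
        rw [Finset.disjoint_right]
        intro x hxT hxC
        have := hCsub hxC
        simp [Finset.mem_compl] at this
        exact this hxT
      simp only [mem_filter, Finset.mem_powersetCard]
      refine ⟨⟨Finset.subset_univ _, ?_⟩, Finset.subset_union_right⟩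
      rw [Finset.card_union_of_disjoint hdisj, hCcard, hT]
      omega
    · intro B hB
      simp only [mem_filter] at hB
      exact Finset.sdiff_union_of_subset hB.2
    · intro C hC
      simp only [Finset.mem_powersetCard] at hC
      apply Finset.union_sdiff_cancel_right
      rw [Finset.disjoint_right]
      intro x hxT hxC
      have := hC.1 hxC
      simp [Finset.mem_compl] at this
      exact this hxT
  rw [this, Finset.card_powersetCard, Finset.card_compl, hT, Fintype.card_fin]

lemma count_bound {n s μ : ℕ} (hμs : 2 * μ ≤ s) (A : Finset (Fin n)) (hA : A.card = s) :
    ((Finset.powersetCard s (Finset.univ : Finset (Fin n))).filter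
        (fun B => 2 * μ ≤ (A ∩ B).card)).card * (2 * μ).choose μ
      ≤ s.choose μ * (n - μ).choose (s - μ) := by
  classical
  set P := Finset.powersetCard s (Finset.univ : Finset (Fin n)) with hP
  set bad := P.filter (fun B => 2 * μ ≤ (A ∩ B).card) with hbad
  calc bad.card * (2 * μ).choose μ
      = ∑ _B ∈ bad, (2 * μ).choose μ := by rw [sum_const, smul_eq_mul]
    _ ≤ ∑ B ∈ bad, ((A ∩ B).card).choose μ := by
        apply Finset.sum_le_sum
        intro B hB
        exact Nat.choose_le_choose μ (mem_filter.1 hB).2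
    _ = ∑ B ∈ bad, ((Finset.powersetCard μ A).filter (fun T => T ⊆ B)).card := by
        refine Finset.sum_congr rfl fun B _ => ?_
        rw [← Finset.card_powersetCard]
        congr 1
        ext T
        simp only [Finset.mem_powersetCard, mem_filter, Finset.subset_inter_iff]
        tauto
    _ ≤ ∑ B ∈ P, ((Finset.powersetCard μ A).filter (fun T => T ⊆ B)).card :=
        Finset.sum_le_sum_of_subset (Finset.filter_subset _ _)
    _ = ∑ T ∈ Finset.powersetCard μ A, (P.filter (fun B => T ⊆ B)).card := by
        simp only [Finset.card_filter]
        rw [Finset.sum_comm]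
    _ = ∑ _T ∈ Finset.powersetCard μ A, (n - μ).choose (s - μ) := by
        refine Finset.sum_congr rfl fun T hT => ?_
        have := (Finset.mem_powersetCard.1 hT).2
        exact superset_count (by omega) T this
    _ = s.choose μ * (n - μ).choose (s - μ) := by
        rw [sum_const, smul_eq_mul, Finset.card_powersetCard, hA]


lemma descFactorial_mul_pow_le {s n : ℕ} (h : s ≤ n) (μ : ℕ) :
    s.descFactorial μ * n ^ μ ≤ n.descFactorial μ * s ^ μ := by
  rw [Nat.descFactorial_eq_prod_range, Nat.descFactorial_eq_prod_range]
  have h1 : (∏ i ∈ range μ, (s - i)) * n ^ μ = ∏ i ∈ range μ, ((s - i) * n) := by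
    rw [Finset.prod_mul_distrib, Finset.prod_const, card_range]
  have h2 : (∏ i ∈ range μ, (n - i)) * s ^ μ = ∏ i ∈ range μ, ((n - i) * s) := by
    rw [Finset.prod_mul_distrib, Finset.prod_const, card_range]
  rw [h1, h2]
  apply Finset.prod_le_prod'
  intro i _
  have key : i * s ≤ i * n := Nat.mul_le_mul_left i h
  calc (s - i) * n = s * n - i * n := by rw [Nat.sub_mul]
    _ ≤ n * s - i * s := by
        rw [Nat.mul_comm s n]
        exact Nat.sub_le_sub_left key _
    _ = (n - i) * s := by rw [Nat.sub_mul]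

lemma choose_sq_le (n s μ : ℕ) (hμ : 1 ≤ μ) (hn : 0 < n) (hsn : s ≤ n)
    (hss : s * s = n * μ) :
    (s.choose μ : ℝ) * s.choose μ
      ≤ Real.exp (-(μ : ℝ) / 3) * ((2 * μ).choose μ) * (n.choose μ) := by
  have fpos : (0:ℝ) < (μ.factorial : ℝ) := by exact_mod_cast μ.factorial_pos
  have npowpos : (0:ℝ) < (n : ℝ) ^ μ := by positivity
  set sd : ℝ := (s.descFactorial μ : ℝ) with hsd
  set nd : ℝ := (n.descFactorial μ : ℝ) with hnd
  set td : ℝ := ((2 * μ).descFactorial μ : ℝ) with htd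
  have sdnn : 0 ≤ sd := by positivity
  have ndnn : 0 ≤ nd := by positivity
  have F1 : sd ≤ (s : ℝ) ^ μ := by
    rw [hsd]; exact_mod_cast Nat.descFactorial_le_pow s μ
  have F2 : sd * (n : ℝ) ^ μ ≤ nd * (s : ℝ) ^ μ := by
    rw [hsd, hnd]; exact_mod_cast descFactorial_mul_pow_le hsn μ
  have F3 : (μ : ℝ) ^ μ * Real.exp (μ / 3) ≤ td := pow_mul_exp_le_descFactorial μ hμ
  -- sd * sd ≤ nd * μ^μ
  have step1 : sd * sd * (n : ℝ) ^ μ ≤ nd * (n : ℝ) ^ μ * (μ : ℝ) ^ μ := by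
    have c1 : sd * sd * (n : ℝ) ^ μ ≤ (s : ℝ) ^ μ * (nd * (s : ℝ) ^ μ) := by
      calc sd * sd * (n : ℝ) ^ μ = sd * (sd * (n : ℝ) ^ μ) := by ring
        _ ≤ (s : ℝ) ^ μ * (nd * (s : ℝ) ^ μ) := by
            apply mul_le_mul F1 F2 (by positivity) (by positivity)
    have c2 : (s : ℝ) ^ μ * (nd * (s : ℝ) ^ μ) = nd * (((s * s : ℕ) : ℝ)) ^ μ := by
      push_cast; ring
    have c3 : ((s * s : ℕ) : ℝ) ^ μ = (n : ℝ) ^ μ * (μ : ℝ) ^ μ := by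
      rw [hss]; push_cast; ring
    calc sd * sd * (n : ℝ) ^ μ ≤ (s : ℝ) ^ μ * (nd * (s : ℝ) ^ μ) := c1
      _ = nd * ((n : ℝ) ^ μ * (μ : ℝ) ^ μ) := by rw [c2, c3]
      _ = nd * (n : ℝ) ^ μ * (μ : ℝ) ^ μ := by ring
  have step2 : sd * sd ≤ nd * (μ : ℝ) ^ μ := by
    have := (mul_le_mul_iff_left₀ npowpos).mpr (le_refl (1:ℝ))
    nlinarith [step1, npowpos]
  have step3 : (μ : ℝ) ^ μ ≤ Real.exp (-(μ : ℝ) / 3) * td := by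
    have he : Real.exp (-(μ : ℝ) / 3) * Real.exp ((μ : ℝ) / 3) = 1 := by
      rw [← Real.exp_add]; ring_nf; exact Real.exp_zero
    have := mul_le_mul_of_nonneg_left F3 (Real.exp_nonneg (-(μ : ℝ) / 3))
    calc (μ : ℝ) ^ μ = Real.exp (-(μ : ℝ) / 3) * ((μ : ℝ) ^ μ * Real.exp ((μ : ℝ) / 3)) := by
          rw [show Real.exp (-(μ : ℝ) / 3) * ((μ : ℝ) ^ μ * Real.exp ((μ : ℝ) / 3))
              = (μ:ℝ)^μ * (Real.exp (-(μ : ℝ) / 3) * Real.exp ((μ : ℝ) / 3)) by ring, he,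
            mul_one]
      _ ≤ Real.exp (-(μ : ℝ) / 3) * td := this
  have key : sd * sd ≤ Real.exp (-(μ : ℝ) / 3) * td * nd := by
    calc sd * sd ≤ nd * (μ : ℝ) ^ μ := step2
      _ ≤ nd * (Real.exp (-(μ : ℝ) / 3) * td) := mul_le_mul_of_nonneg_left step3 ndnn
      _ = Real.exp (-(μ : ℝ) / 3) * td * nd := by ring
  -- convert descFactorial to choose
  have hsd' : sd = (μ.factorial : ℝ) * (s.choose μ : ℝ) := by
    rw [hsd, Nat.descFactorial_eq_factorial_mul_choose]; push_cast; ring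
  have hnd' : nd = (μ.factorial : ℝ) * (n.choose μ : ℝ) := by
    rw [hnd, Nat.descFactorial_eq_factorial_mul_choose]; push_cast; ring
  have htd' : td = (μ.factorial : ℝ) * ((2 * μ).choose μ : ℝ) := by
    rw [htd, Nat.descFactorial_eq_factorial_mul_choose]; push_cast; ring
  rw [hsd', hnd', htd'] at key
  nlinarith [key, fpos, mul_pos fpos fpos]

lemma hypergeometric_tail_bound_aux (n s μ : ℕ) (hμ1 : 1 ≤ μ) (h2μs : 2 * μ ≤ s)
    (hsn : s ≤ n) (hss : s * s = n * μ) (hnpos : 0 < n)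
    (A : Finset (Fin n)) (hA : A.card = s)
    (hne : (Finset.powersetCard s (Finset.univ : Finset (Fin n))).Nonempty) :
    (PMF.uniformOfFinset (Finset.powersetCard s (Finset.univ : Finset (Fin n)))
        hne).toOuterMeasure {B | 2 * μ ≤ (A ∩ B).card}
      ≤ ENNReal.ofReal (Real.exp (-(μ : ℝ) / 3)) := by
  classical
  rw [PMF.toOuterMeasure_uniformOfFinset_apply]
  simp only [Set.mem_setOf_eq]
  have hPcard : (Finset.powersetCard s (Finset.univ : Finset (Fin n))).card = n.choose s := by
    rw [Finset.card_powersetCard, Finset.card_univ, Fintype.card_fin]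
  rw [hPcard]
  set bad := (Finset.powersetCard s (Finset.univ : Finset (Fin n))).filter
    (fun B => 2 * μ ≤ (A ∩ B).card) with hbad
  have hμn : μ ≤ n := le_trans (by omega) hsn
  set E : ℝ := Real.exp (-(μ : ℝ) / 3) with hE
  have hreal : (bad.card : ℝ) ≤ E * (n.choose s : ℝ) := by
    have nat1 : bad.card * (2 * μ).choose μ ≤ s.choose μ * (n - μ).choose (s - μ) :=
      count_bound h2μs A hA
    have natid : n.choose s * s.choose μ = n.choose μ * (n - μ).choose (s - μ) :=
      Nat.choose_mul (le_trans (by omega) h2μs)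
    have hsq : (s.choose μ : ℝ) * s.choose μ ≤ E * ((2 * μ).choose μ) * (n.choose μ) :=
      choose_sq_le n s μ hμ1 hnpos hsn hss
    have hc2pos : (0:ℝ) < ((2 * μ).choose μ : ℝ) := by
      exact_mod_cast Nat.choose_pos (by omega : μ ≤ 2 * μ)
    have hcnpos : (0:ℝ) < (n.choose μ : ℝ) := by exact_mod_cast Nat.choose_pos hμn
    have hcnsnn : (0:ℝ) ≤ (n.choose s : ℝ) := by positivity
    have nat1R : (bad.card : ℝ) * ((2 * μ).choose μ)
        ≤ (s.choose μ : ℝ) * ((n - μ).choose (s - μ)) := by exact_mod_cast nat1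
    have natidR : (n.choose s : ℝ) * (s.choose μ)
        = (n.choose μ : ℝ) * ((n - μ).choose (s - μ)) := by exact_mod_cast natid
    have chain : (bad.card : ℝ) * (((2 * μ).choose μ : ℝ) * (n.choose μ : ℝ))
        ≤ (E * (n.choose s : ℝ)) * (((2 * μ).choose μ : ℝ) * (n.choose μ : ℝ)) := by
      calc (bad.card : ℝ) * (((2 * μ).choose μ : ℝ) * (n.choose μ : ℝ))
          = ((bad.card : ℝ) * ((2 * μ).choose μ)) * (n.choose μ : ℝ) := by ring
        _ ≤ ((s.choose μ : ℝ) * ((n - μ).choose (s - μ))) * (n.choose μ : ℝ) :=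
            mul_le_mul_of_nonneg_right nat1R hcnpos.le
        _ = (s.choose μ : ℝ) * ((n.choose μ : ℝ) * ((n - μ).choose (s - μ))) := by ring
        _ = (s.choose μ : ℝ) * ((n.choose s : ℝ) * (s.choose μ)) := by rw [← natidR]
        _ = ((s.choose μ : ℝ) * (s.choose μ)) * (n.choose s : ℝ) := by ring
        _ ≤ (E * ((2 * μ).choose μ) * (n.choose μ)) * (n.choose s : ℝ) :=
            mul_le_mul_of_nonneg_right hsq hcnsnn
        _ = (E * (n.choose s : ℝ)) * (((2 * μ).choose μ : ℝ) * (n.choose μ : ℝ)) := by ring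
    exact le_of_mul_le_mul_right chain (by positivity)
  apply ENNReal.div_le_of_le_mul
  have hEnn : 0 ≤ E := by rw [hE]; positivity
  have final : ((bad.card : ℕ) : ℝ≥0∞) ≤ ENNReal.ofReal E * ((n.choose s : ℕ) : ℝ≥0∞) := by
    rw [show ((bad.card : ℕ) : ℝ≥0∞) = ENNReal.ofReal (bad.card : ℝ) from
        (ENNReal.ofReal_natCast _).symm,
      show ((n.choose s : ℕ) : ℝ≥0∞) = ENNReal.ofReal ((n.choose s : ℕ) : ℝ) from
        (ENNReal.ofReal_natCast _).symm,
      ← ENNReal.ofReal_mul hEnn]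
    exact ENNReal.ofReal_le_ofReal hreal
  rw [hbad] at final
  convert final using 4


theorem hypergeometric_tail_bound (N r : ℕ) (hN : 2 ≤ N) (hr : 2 ≤ r)
    (A : Finset (Fin (N ^ (2 * r)))) (hA : A.card = N ^ (2 * r - 1))
    (hne : (Finset.powersetCard (N ^ (2 * r - 1))
      (Finset.univ : Finset (Fin (N ^ (2 * r))))).Nonempty) :
    (PMF.uniformOfFinset
        (Finset.powersetCard (N ^ (2 * r - 1))
          (Finset.univ : Finset (Fin (N ^ (2 * r))))) hne).toOuterMeasure
        {B | 2 * N ^ (2 * r - 2) ≤ (A ∩ B).card}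
      ≤ ENNReal.ofReal (Real.exp (-((N : ℝ) ^ (2 * r - 2)) / 3)) := by
  have hNpos : 0 < N := by omega
  have hμ1 : 1 ≤ N ^ (2 * r - 2) := Nat.one_le_pow _ _ hNpos
  have hsμ : N ^ (2 * r - 1) = N ^ (2 * r - 2) * N := by
    rw [← pow_succ]; congr 1; omega
  have hns : N ^ (2 * r) = N ^ (2 * r - 1) * N := by
    rw [← pow_succ]; congr 1; omega
  have h2μs : 2 * N ^ (2 * r - 2) ≤ N ^ (2 * r - 1) := by
    rw [hsμ]
    calc 2 * N ^ (2 * r - 2) = N ^ (2 * r - 2) * 2 := by ring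
      _ ≤ N ^ (2 * r - 2) * N := Nat.mul_le_mul_left _ hN
  have hsn : N ^ (2 * r - 1) ≤ N ^ (2 * r) :=
    Nat.pow_le_pow_right hNpos (by omega)
  have hss : N ^ (2 * r - 1) * N ^ (2 * r - 1) = N ^ (2 * r) * N ^ (2 * r - 2) := by
    rw [← pow_add, ← pow_add]; congr 1; omega
  have hnpos : 0 < N ^ (2 * r) := pow_pos hNpos _
  have hexp : (-(((N ^ (2 * r - 2) : ℕ) : ℝ)) / 3) = (-((N : ℝ) ^ (2 * r - 2)) / 3) := by
    push_cast; ring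
  rw [← hexp]
  exact hypergeometric_tail_bound_aux (N ^ (2 * r)) (N ^ (2 * r - 1)) (N ^ (2 * r - 2))
    hμ1 h2μs hsn hss hnpos A hA hne
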